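/- Let 𝔤 be a nonabelian finite simple Lie algebra over 𝔽_p of dimension d, and let A be a generating set of 𝔤. For subsets X,Y ⊆ 𝔤 write X+Y and [X,Y] for elementwise sum and bracket, and define A^1 = {0} ∪ A and A^k = ⋃_{0<j<k} ((A^j + A^{k−j}) ∪ [A^j, A^{k−j}]). Suppose A^k contains an entire line: there is a nonzero v ∈ 𝔤 with α·v ∈ A^k for all α ∈ 𝔽_p. Then A^{k·d + d²} = 𝔤; in particular diam(𝔤, A) ≤ k·d + d². -/

import Mathlib

variable {L : Type*} [LieRing L]

/-- The ball `A^k`: `A^1 = {0} ∪ A`,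
`A^k = ⋃_{0<j<k} ((A^j + A^{k-j}) ∪ [A^j, A^{k-j}])`. -/
def ball (A : Set L) : ℕ → Set L
  | 0 => ∅
  | 1 => insert 0 A
  | (n + 2) =>
      ⋃ (j : ℕ) (_ : 0 < j) (_ : j < n + 2),
        (Set.image2 (· + ·) (ball A j) (ball A (n + 2 - j)) ∪
          Set.image2 (fun x y => ⁅x, y⁆) (ball A j) (ball A (n + 2 - j)))
  termination_by k => k
  decreasing_by all_goals omega

lemma mem_ball_add {A : Set L} {a b : ℕ} (ha : 1 ≤ a) (hb : 1 ≤ b)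
    {x y : L} (hx : x ∈ ball A a) (hy : y ∈ ball A b) : x + y ∈ ball A (a + b) := by
  obtain ⟨n, hn⟩ : ∃ n, a + b = n + 2 := ⟨a + b - 2, by omega⟩
  rw [hn, ball]
  refine Set.mem_iUnion.2 ⟨a, Set.mem_iUnion.2 ⟨ha, Set.mem_iUnion.2 ⟨by omega, ?_⟩⟩⟩
  have h : n + 2 - a = b := by omega
  rw [h]
  exact Or.inl ⟨x, hx, y, hy, rfl⟩

lemma mem_ball_lie {A : Set L} {a b : ℕ} (ha : 1 ≤ a) (hb : 1 ≤ b)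
    {x y : L} (hx : x ∈ ball A a) (hy : y ∈ ball A b) : ⁅x, y⁆ ∈ ball A (a + b) := by
  obtain ⟨n, hn⟩ : ∃ n, a + b = n + 2 := ⟨a + b - 2, by omega⟩
  rw [hn, ball]
  refine Set.mem_iUnion.2 ⟨a, Set.mem_iUnion.2 ⟨ha, Set.mem_iUnion.2 ⟨by omega, ?_⟩⟩⟩
  have h : n + 2 - a = b := by omega
  rw [h]
  exact Or.inr ⟨x, hx, y, hy, rfl⟩

lemma zero_mem_ball {A : Set L} : ∀ {n : ℕ}, 1 ≤ n → (0 : L) ∈ ball A n := by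
  intro n
  induction n with
  | zero => omega
  | succ m ih =>
    intro _
    rcases Nat.eq_or_lt_of_le (show 1 ≤ m + 1 by omega) with h | h
    · rw [← h, ball]; exact Set.mem_insert 0 A
    · have hm : 1 ≤ m := by omega
      have := mem_ball_add (A := A) hm (le_refl 1) (ih hm)
        (show (0:L) ∈ ball A 1 by rw [ball]; exact Set.mem_insert 0 A)
      simpa using this

lemma ball_mono {A : Set L} {a b : ℕ} (ha : 1 ≤ a) (hab : a ≤ b) :
    ball A a ⊆ ball A b := by
  rcases Nat.eq_or_lt_of_le hab with rfl | h
  · exact le_rfl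
  · intro x hx
    have := mem_ball_add ha (show 1 ≤ b - a by omega) hx (zero_mem_ball (by omega))
    have hb : a + (b - a) = b := by omega
    simpa [hb] using this

lemma sum_mem_ball {A : Set L} {m : ℕ} (hm : 1 ≤ m) {ι : Type*} (s : Finset ι)
    (hs : s.Nonempty) (f : ι → L) (hf : ∀ i ∈ s, f i ∈ ball A m) :
    (∑ i ∈ s, f i) ∈ ball A (s.card * m) := by
  induction s using Finset.cons_induction with
  | empty => simp at hs
  | cons a t hat ih =>
    rw [Finset.sum_cons]
    rcases t.eq_empty_or_nonempty with rfl | ht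
    · simpa using hf a (by simp)
    · have h1 := hf a (Finset.mem_cons_self _ _)
      have h2 := ih ht (fun i hi => hf i (Finset.mem_cons.2 (Or.inr hi)))
      have h3 := mem_ball_add hm
        (Nat.one_le_iff_ne_zero.2 (by positivity)) h1 h2
      · simpa [Finset.card_cons, Nat.succ_mul, add_comm] using h3

/-- Iterated bracket "towers" based at `v`. -/
def towers (A : Set L) (v : L) : ℕ → Set L
  | 0 => {v}
  | (m+1) => towers A v m ∪ {z | ∃ a ∈ A, ∃ x ∈ towers A v m, z = ⁅a, x⁆}

section Field

variable (K : Type*) [Field K] [LieAlgebra K L]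

lemma tower_smul_mem_ball {A : Set L} {v : L} {k : ℕ}
    (hline : ∀ α : K, α • v ∈ ball A k) :
    ∀ m, ∀ w ∈ towers A v m, ∀ α : K, α • w ∈ ball A (k + m) := by
  have hk : 1 ≤ k := by
    by_contra h
    have h0 : k = 0 := by omega
    have := hline 1
    rw [h0, ball] at this
    exact this
  intro m
  induction m with
  | zero => intro w hw α; rw [Set.mem_singleton_iff.1 hw]; simpa using hline α
  | succ m ih =>
    intro w hw α
    rcases hw with hw | ⟨a, ha, x, hx, rfl⟩
    · exact ball_mono (by omega) (by omega) (ih w hw α)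
    · have h1 : a ∈ ball A 1 := by rw [ball]; exact Set.mem_insert_iff.2 (Or.inr ha)
      have h2 := ih x hx α
      have := mem_ball_lie (le_refl 1) (by omega) h1 h2
      rw [lie_smul] at this
      have he : 1 + (k + m) = k + (m + 1) := by omega
      rwa [he] at this

/-- The set of elements whose adjoint action preserves a submodule `M`, as a Lie subalgebra. -/
def stab (M : Submodule K L) : LieSubalgebra K L where
  carrier := {z | ∀ x ∈ M, ⁅z, x⁆ ∈ M}
  add_mem' := fun {y z} hy hz x hx => by
    rw [add_lie]; exact M.add_mem (hy x hx) (hz x hx)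
  zero_mem' := fun x hx => by rw [zero_lie]; exact M.zero_mem
  smul_mem' := fun c z hz x hx => by rw [smul_lie]; exact M.smul_mem c (hz x hx)
  lie_mem' := fun {y z} hy hz x hx => by
    rw [lie_lie]; exact M.sub_mem (hy _ (hz x hx)) (hz _ (hy x hx))

lemma span_towers_eq_top [Module.Finite K L] [LieAlgebra.IsSimple K L]
    {A : Set L} (hA : LieSubalgebra.lieSpan K L A = ⊤) {v : L} (hv : v ≠ 0) :
    Submodule.span K (towers A v (Module.finrank K L - 1)) = ⊤ := by
  haveI : Nontrivial L := ⟨⟨v, 0, hv⟩⟩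
  set d := Module.finrank K L with hd
  set T : ℕ → Submodule K L := fun m => Submodule.span K (towers A v m) with hT
  have hmono : ∀ m, T m ≤ T (m + 1) := fun m =>
    Submodule.span_mono (by rw [towers]; exact Set.subset_union_left)
  have hvmem : ∀ m, v ∈ T m := by
    intro m
    induction m with
    | zero => exact Submodule.subset_span rfl
    | succ m ih => exact hmono m ih
  -- if the chain stabilizes, the stable submodule is an ideal, hence ⊤
  have hstab : ∀ m, T (m + 1) ≤ T m → T m = ⊤ := by
    intro m hle
    have hbr : ∀ a ∈ A, ∀ x ∈ T m, ⁅a, x⁆ ∈ T m := by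
      intro a ha x hx
      induction hx using Submodule.span_induction with
      | mem w hw =>
        exact hle (Submodule.subset_span (by
          rw [towers]; exact Or.inr ⟨a, ha, w, hw, rfl⟩))
      | zero => rw [lie_zero]; exact (T m).zero_mem
      | add x y hx hy ihx ihy => rw [lie_add]; exact (T m).add_mem ihx ihy
      | smul c x hx ihx => rw [lie_smul]; exact (T m).smul_mem c ihx
    have hsub : A ⊆ (stab K (T m) : Set L) := fun a ha x hx => hbr a ha x hx
    have htop : LieSubalgebra.lieSpan K L A ≤ stab K (T m) :=
      (LieSubalgebra.lieSpan_le).2 hsub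
    rw [hA] at htop
    have hall : ∀ z : L, ∀ x ∈ T m, ⁅z, x⁆ ∈ T m := fun z x hx =>
      htop (LieSubalgebra.mem_top z) x hx
    set I : LieIdeal K L :=
      { toSubmodule := T m
        lie_mem := fun {z x} hx => hall z x hx } with hI
    rcases LieAlgebra.IsSimple.eq_bot_or_eq_top I with h | h
    · exfalso
      have : v ∈ I := hvmem m
      rw [h] at this
      exact hv this
    · have : ∀ x : L, x ∈ T m := fun x => by
        have : x ∈ I := h ▸ LieSubmodule.mem_top x
        exact this
      exact Submodule.eq_top_iff'.2 this
  -- finrank grows along the chain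
  have hgrow : ∀ m, T m = ⊤ ∨ m + 1 ≤ Module.finrank K (T m) := by
    intro m
    induction m with
    | zero =>
      right
      have : T 0 = Submodule.span K {v} := rfl
      rw [this, finrank_span_singleton hv]
    | succ m ih =>
      rcases ih with h | h
      · left; exact top_le_iff.1 (h ▸ hmono m)
      · by_cases hle : T (m + 1) ≤ T m
        · left
          have := hstab m hle
          exact top_le_iff.1 (this ▸ hmono m)
        · right
          have hlt : T m < T (m + 1) := lt_of_le_of_ne (hmono m) (fun he => hle (le_of_eq he.symm))
          have := Submodule.finrank_lt_finrank_of_lt hlt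
          omega
  rcases hgrow (d - 1) with h | h
  · exact h
  · have h2 : Module.finrank K ↥(T (d - 1)) ≤ d := Submodule.finrank_le _
    have h3 : 1 ≤ d := Module.finrank_pos
    have h4 : Module.finrank K ↥(T (d - 1)) = d := by omega
    exact Submodule.eq_top_of_finrank_eq h4

end Field

/-- If a generating set `A` of a nonabelian finite simple Lie algebra `𝔤` over `𝔽_p` of
dimension `d` is such that `A^k` contains a full line `𝔽_p · v`, `v ≠ 0`, then
`A^{k·d + d²} = 𝔤`. -/
theorem stmt3 (p : ℕ) [Fact p.Prime] [LieAlgebra (ZMod p) L] [Module.Finite (ZMod p) L]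
    [LieAlgebra.IsSimple (ZMod p) L]
    (A : Set L) (hA : LieSubalgebra.lieSpan (ZMod p) L A = ⊤)
    (k : ℕ) (v : L) (hv : v ≠ 0) (hline : ∀ α : ZMod p, α • v ∈ ball A k) :
    ball A (k * Module.finrank (ZMod p) L + Module.finrank (ZMod p) L ^ 2) = Set.univ := by
  classical
  set d := Module.finrank (ZMod p) L with hd
  haveI : Nontrivial L := ⟨⟨v, 0, hv⟩⟩
  have hd1 : 1 ≤ d := Module.finrank_pos
  have hk : 1 ≤ k := by
    by_contra h
    have h0 : k = 0 := by omega
    have := hline 1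
    rw [h0, ball] at this
    exact this
  have hsp := span_towers_eq_top (ZMod p) hA hv
  obtain ⟨t, hts, htsp, htli⟩ := exists_linearIndependent (ZMod p) (towers A v (d - 1))
  rw [hsp] at htsp
  haveI : Fintype t := (htli.setFinite).fintype
  let b : Module.Basis t (ZMod p) L := Module.Basis.mk htli (by rw [Subtype.range_coe, htsp])
  have hcard : Fintype.card t = d := (Module.finrank_eq_card_basis b).symm
  apply Set.eq_univ_iff_forall.2
  intro x
  have hrep : ∑ i : t, b.repr x i • (b i) = x := b.sum_repr x
  have hterm : ∀ i : t, b.repr x i • (b i) ∈ ball A (k + (d - 1)) := by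
    intro i
    have hbi : (b i) = (i : L) := Module.Basis.mk_apply _ _ i
    rw [hbi]
    exact tower_smul_mem_ball (ZMod p) hline (d - 1) (i : L) (hts i.2) _
  have hne : (Finset.univ : Finset t).Nonempty := by
    rw [← Finset.card_pos, Finset.card_univ, hcard]; omega
  have hsum := sum_mem_ball (show 1 ≤ k + (d - 1) by omega) Finset.univ hne _
    (fun i _ => hterm i)
  rw [hrep, Finset.card_univ, hcard] at hsum
  have hle : d * (k + (d - 1)) ≤ k * d + d ^ 2 := by
    calc d * (k + (d - 1)) ≤ d * (k + d) := Nat.mul_le_mul_left _ (by omega)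
    _ = k * d + d ^ 2 := by ring
  exact ball_mono (Nat.mul_pos (by omega) (by omega)) hle hsum
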